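/- Let f : ℤ → ℤ be a bijection such that |f(x) - f(y)| ≤ K·|x - y| and |x - y| ≤ L·|f(x) - f(y)| for all x, y ∈ ℤ, with K, L ≥ 1. Then either sup_{x ∈ ℤ} |f(x) - x| < ∞ or sup_{x ∈ ℤ} |f(x) + x| < ∞. -/

import Mathlib

private lemma ivt_aux (g : ℤ → ℤ) (K : ℤ) (hK : 1 ≤ K)
    (hstep : ∀ z : ℤ, |g (z + 1) - g z| ≤ K) :
    ∀ n : ℕ, ∀ a : ℤ, K < g a → g (a + n) < -K →
      ∃ z : ℤ, a ≤ z ∧ z ≤ a + n ∧ |g z| ≤ K := by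
  intro n
  induction n with
  | zero =>
    intro a h1 h2
    simp only [Nat.cast_zero, add_zero] at h2
    omega
  | succ n ih =>
    intro a h1 h2
    push_cast at h2
    rw [show a + ((n : ℤ) + 1) = (a + 1) + (n : ℤ) from by ring] at h2
    by_cases hc : K < g (a + 1)
    · obtain ⟨z, hz1, hz2, hz3⟩ := ih (a + 1) hc h2
      exact ⟨z, by omega, by push_cast at hz2 ⊢; omega, hz3⟩
    · by_cases hc2 : -K ≤ g (a + 1)
      · exact ⟨a + 1, by omega, by push_cast; omega,
          abs_le.mpr ⟨hc2, le_of_not_gt hc⟩⟩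
      · exfalso
        have := hstep a
        rw [abs_le] at this
        omega

private lemma ivt (g : ℤ → ℤ) (K : ℤ) (hK : 1 ≤ K)
    (hstep : ∀ z : ℤ, |g (z + 1) - g z| ≤ K)
    (a b : ℤ) (hab : a ≤ b) (h1 : K < g a) (h2 : g b < -K) :
    ∃ z : ℤ, a ≤ z ∧ z ≤ b ∧ |g z| ≤ K := by
  obtain ⟨n, hn⟩ := Int.le.dest hab
  subst hn
  exact ivt_aux g K hK hstep n a h1 h2

private lemma step_of_lip (f : ℤ → ℤ) (K c : ℤ)
    (hLip : ∀ x y : ℤ, |f x - f y| ≤ K * |x - y|) (z : ℤ) :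
    |(f (z + 1) - c) - (f z - c)| ≤ K := by
  have h := hLip (z + 1) z
  rw [show (z + 1 : ℤ) - z = 1 from by ring] at h
  simp only [abs_one, mul_one] at h
  rw [show (f (z + 1) - c) - (f z - c) = f (z + 1) - f z from by ring]
  exact h

private lemma rayR (f : ℤ → ℤ) (hInj : Function.Injective f) (K L : ℤ)
    (hK : 1 ≤ K) (hL : 1 ≤ L)
    (hLip : ∀ x y : ℤ, |f x - f y| ≤ K * |x - y|)
    (hLipInv : ∀ x y : ℤ, |x - y| ≤ L * |f x - f y|)
    (b x y : ℤ) (hx : b + L * K < x) (hy : b + L * K < y)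
    (hfx : f b < f x) : f b < f y := by
  have hP : (1 : ℤ) ≤ L * K := by nlinarith
  rcases lt_trichotomy (f y) (f b) with hlt | heq | hgt
  · exfalso
    have hxb : x - b ≤ L * (f x - f b) := by
      have h := hLipInv x b
      rwa [abs_of_pos (by linarith : (0:ℤ) < x - b),
        abs_of_pos (by linarith : (0:ℤ) < f x - f b)] at h
    have hKx : K < f x - f b := by
      by_contra h
      push_neg at h
      have := mul_le_mul_of_nonneg_left h (by linarith : (0:ℤ) ≤ L)
      linarith
    have hyb : y - b ≤ L * (f b - f y) := by
      have h := hLipInv y b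
      rw [abs_of_pos (by linarith : (0:ℤ) < y - b),
        abs_of_neg (by linarith : f y - f b < 0)] at h
      linarith [h, show -(f y - f b) = f b - f y from by ring]
    have hKy : K < f b - f y := by
      by_contra h
      push_neg at h
      have := mul_le_mul_of_nonneg_left h (by linarith : (0:ℤ) ≤ L)
      linarith
    rcases le_or_gt x y with hxy | hyx
    · obtain ⟨z, hz1, hz2, hz3⟩ := ivt (fun z => f z - f b) K hK
        (step_of_lip f K (f b) hLip) x y hxy (by simpa using hKx)
        (by linarith)
      have h5 := hLipInv z b
      have h6 : L * |f z - f b| ≤ L * K :=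
        mul_le_mul_of_nonneg_left hz3 (by linarith)
      have h7 : z - b ≤ |z - b| := le_abs_self _
      linarith
    · obtain ⟨z, hz1, hz2, hz3⟩ := ivt (fun z => f b - f z) K hK
        (fun z => by
          have := step_of_lip f K (f b) hLip z
          rw [show (f b - f (z+1)) - (f b - f z) = -((f (z+1) - f b) - (f z - f b)) from by ring,
            abs_neg]
          exact this) y x (le_of_lt hyx) (by linarith)
        (by linarith)
      have hz3' : |f z - f b| ≤ K := by rwa [abs_sub_comm] at hz3
      have h5 := hLipInv z b
      have h6 : L * |f z - f b| ≤ L * K :=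
        mul_le_mul_of_nonneg_left hz3' (by linarith)
      have h7 : z - b ≤ |z - b| := le_abs_self _
      linarith
  · exfalso
    have := hInj heq
    linarith
  · exact hgt

private lemma leftRay (f : ℤ → ℤ) (hf : Function.Bijective f) (K L : ℤ)
    (hK : 1 ≤ K) (hL : 1 ≤ L)
    (hLip : ∀ x y : ℤ, |f x - f y| ≤ K * |x - y|)
    (hLipInv : ∀ x y : ℤ, |x - y| ≤ L * |f x - f y|)
    (b : ℤ) (hRb : ∀ x : ℤ, b + L * K < x → f b < f x) :
    ∀ x : ℤ, x < b - L * K → f x < f b := by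
  have hP : (1 : ℤ) ≤ L * K := by nlinarith
  by_contra hcon
  push_neg at hcon
  obtain ⟨x0, hx0, hfx0⟩ := hcon
  have hfx0' : f b < f x0 := by
    rcases lt_or_eq_of_le hfx0 with h | h
    · exact h
    · exfalso; have := hf.injective h.symm; linarith
  -- transport rayR through z ↦ f (-z) to get the left-ray version
  have hAll : ∀ y : ℤ, y < b - L * K → f b < f y := by
    intro y hy
    have hInj' : Function.Injective (fun z : ℤ => f (-z)) := by
      intro a c hac
      have := hf.injective hac
      omega
    have hLip' : ∀ u v : ℤ, |f (-u) - f (-v)| ≤ K * |u - v| := by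
      intro u v
      have h := hLip (-u) (-v)
      rwa [show (-u : ℤ) - -v = -(u - v) from by ring, abs_neg] at h
    have hLipInv' : ∀ u v : ℤ, |u - v| ≤ L * |f (-u) - f (-v)| := by
      intro u v
      have h := hLipInv (-u) (-v)
      rwa [show (-u : ℤ) - -v = -(u - v) from by ring, abs_neg] at h
    have := rayR (fun z => f (-z)) hInj' K L hK hL hLip' hLipInv'
      (-b) (-x0) (-y) (by linarith) (by linarith)
      (by simp only [neg_neg]; exact hfx0')
    simpa using this
  have hband : ∀ z : ℤ, f z ≤ f b → b - L * K ≤ z ∧ z ≤ b + L * K := by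
    intro z hz
    constructor
    · by_contra h
      push_neg at h
      have := hAll z (by linarith)
      linarith
    · by_contra h
      push_neg at h
      have := hRb z (by linarith)
      linarith
  set e := Equiv.ofBijective f hf with he
  have hfe : ∀ v : ℤ, f (e.symm v) = v := fun v => e.apply_symm_apply v
  have hcard : (Finset.Icc (f b - (2 * (L * K) + 1)) (f b)).card ≤
      (Finset.Icc (b - L * K) (b + L * K)).card := by
    apply Finset.card_le_card_of_injOn (fun v => e.symm v)
    · intro v hv
      simp only [Finset.mem_coe, Finset.mem_Icc] at hv ⊢
      have hb := hband (e.symm v) (by rw [hfe]; exact hv.2)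
      exact hb
    · exact fun a _ c _ h => e.symm.injective h
  rw [Int.card_Icc, Int.card_Icc] at hcard
  have hcast := (Nat.cast_le (α := ℤ)).mpr hcard
  rw [Int.toNat_of_nonneg (by linarith : (0:ℤ) ≤ f b + 1 - (f b - (2 * (L * K) + 1))),
    Int.toNat_of_nonneg (by linarith : (0:ℤ) ≤ b + L * K + 1 - (b - L * K))] at hcast
  linarith

private lemma main_aux (f : ℤ → ℤ) (hf : Function.Bijective f) (K L : ℤ)
    (hK : 1 ≤ K) (hL : 1 ≤ L)
    (hLip : ∀ x y : ℤ, |f x - f y| ≤ K * |x - y|)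
    (hLipInv : ∀ x y : ℤ, |x - y| ≤ L * |f x - f y|)
    (hpos : ∀ x : ℤ, L * K < x → f 0 < f x) :
    ∃ M : ℤ, ∀ x : ℤ, |f x - x| ≤ M := by
  have hP : (1 : ℤ) ≤ L * K := by nlinarith
  have hB : ∀ b x : ℤ, b + L * K < x → f b < f x := by
    intro b x hx
    set w : ℤ := max (b + L * K) (max (L * K) (L * (f b - f 0))) + 1 with hw
    have hw1 : b + L * K < w := by
      have := le_max_left (b + L * K) (max (L * K) (L * (f b - f 0)))
      linarith
    have hw2 : L * K < w := by
      have h1 := le_max_right (b + L * K) (max (L * K) (L * (f b - f 0)))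
      have h2 := le_max_left (L * K) (L * (f b - f 0))
      linarith
    have hw3 : L * (f b - f 0) < w := by
      have h1 := le_max_right (b + L * K) (max (L * K) (L * (f b - f 0)))
      have h2 := le_max_right (L * K) (L * (f b - f 0))
      linarith
    have hfw : f 0 < f w := hpos w hw2
    have h5 : w ≤ L * (f w - f 0) := by
      have h := hLipInv w 0
      rwa [sub_zero, abs_of_pos (by linarith : (0:ℤ) < w),
        abs_of_pos (by linarith : (0:ℤ) < f w - f 0)] at h
    have hfbw : f b < f w := by
      by_contra h
      push_neg at h
      have : L * (f w - f 0) ≤ L * (f b - f 0) :=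
        mul_le_mul_of_nonneg_left (by linarith) (by linarith)
      linarith
    exact rayR f hf.injective K L hK hL hLip hLipInv b w x hw1 hx hfbw
  have hA : ∀ b x : ℤ, x < b - L * K → f x < f b :=
    fun b => leftRay f hf K L hK hL hLip hLipInv b (hB b)
  set e := Equiv.ofBijective f hf with he
  have hfe : ∀ v : ℤ, f (e.symm v) = v := fun v => e.apply_symm_apply v
  -- upper bound for x ≥ 0
  have count_up : ∀ x : ℤ, 0 ≤ x → f x - f 0 ≤ x + 2 * (L * K) + 1 := by
    intro x hx
    have hcard : (Finset.Icc (f 0 + 1) (f x)).card ≤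
        (Finset.Icc (-(L * K)) (x + L * K)).card := by
      apply Finset.card_le_card_of_injOn (fun v => e.symm v)
      · intro v hv
        simp only [Finset.mem_coe, Finset.mem_Icc] at hv ⊢
        constructor
        · by_contra h
          push_neg at h
          have := hA 0 (e.symm v) (by linarith)
          rw [hfe] at this
          linarith
        · by_contra h
          push_neg at h
          have := hB x (e.symm v) (by linarith)
          rw [hfe] at this
          linarith
      · exact fun a _ c _ h => e.symm.injective h
    rw [Int.card_Icc, Int.card_Icc] at hcard
    have hcast := (Nat.cast_le (α := ℤ)).mpr hcard
    rw [Int.toNat_of_nonneg (by linarith : (0:ℤ) ≤ x + L * K + 1 - -(L * K))] at hcast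
    have h2 : f x + 1 - (f 0 + 1) ≤ ((f x + 1 - (f 0 + 1)).toNat : ℤ) :=
      Int.self_le_toNat _
    linarith
  -- lower bound for x large positive
  have count_lo : ∀ x : ℤ, 2 * (L * K) + 2 ≤ x → x - 2 * (L * K) ≤ f x - f 0 := by
    intro x hx
    have hcard : (Finset.Icc (L * K + 1) (x - L * K - 1)).card ≤
        (Finset.Icc (f 0 + 1) (f x - 1)).card := by
      apply Finset.card_le_card_of_injOn f
      · intro y hy
        simp only [Finset.mem_coe, Finset.mem_Icc] at hy ⊢
        constructor
        · have := hB 0 y (by linarith)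
          linarith
        · have := hA x y (by linarith)
          linarith
      · exact fun a _ c _ h => hf.injective h
    rw [Int.card_Icc, Int.card_Icc] at hcard
    have hcast := (Nat.cast_le (α := ℤ)).mpr hcard
    rw [Int.toNat_of_nonneg
      (by linarith : (0:ℤ) ≤ x - L * K - 1 + 1 - (L * K + 1))] at hcast
    rcases le_or_gt 0 (f x - 1 + 1 - (f 0 + 1)) with h | h
    · rw [Int.toNat_of_nonneg h] at hcast
      linarith
    · rw [Int.toNat_of_nonpos (le_of_lt h)] at hcast
      simp at hcast
      linarith
  -- upper bound for x ≤ 0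
  have count_dn : ∀ x : ℤ, x ≤ 0 → f 0 - f x ≤ -x + 2 * (L * K) + 1 := by
    intro x hx
    have hcard : (Finset.Icc (f x) (f 0 - 1)).card ≤
        (Finset.Icc (x - L * K) (L * K)).card := by
      apply Finset.card_le_card_of_injOn (fun v => e.symm v)
      · intro v hv
        simp only [Finset.mem_coe, Finset.mem_Icc] at hv ⊢
        constructor
        · by_contra h
          push_neg at h
          have := hA x (e.symm v) (by linarith)
          rw [hfe] at this
          linarith
        · by_contra h
          push_neg at h
          have := hB 0 (e.symm v) (by linarith)
          rw [hfe] at this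
          linarith
      · exact fun a _ c _ h => e.symm.injective h
    rw [Int.card_Icc, Int.card_Icc] at hcard
    have hcast := (Nat.cast_le (α := ℤ)).mpr hcard
    rw [Int.toNat_of_nonneg (by linarith : (0:ℤ) ≤ L * K + 1 - (x - L * K))] at hcast
    have h2 : f 0 - 1 + 1 - f x ≤ ((f 0 - 1 + 1 - f x).toNat : ℤ) :=
      Int.self_le_toNat _
    linarith
  -- lower bound for x large negative
  have count_ln : ∀ x : ℤ, x ≤ -(2 * (L * K) + 2) → -x - 2 * (L * K) ≤ f 0 - f x := by
    intro x hx
    have hcard : (Finset.Icc (x + L * K + 1) (-(L * K) - 1)).card ≤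
        (Finset.Icc (f x + 1) (f 0 - 1)).card := by
      apply Finset.card_le_card_of_injOn f
      · intro y hy
        simp only [Finset.mem_coe, Finset.mem_Icc] at hy ⊢
        constructor
        · have := hB x y (by linarith)
          linarith
        · have := hA 0 y (by linarith)
          linarith
      · exact fun a _ c _ h => hf.injective h
    rw [Int.card_Icc, Int.card_Icc] at hcard
    have hcast := (Nat.cast_le (α := ℤ)).mpr hcard
    rw [Int.toNat_of_nonneg
      (by linarith : (0:ℤ) ≤ -(L * K) - 1 + 1 - (x + L * K + 1))] at hcast
    rcases le_or_gt 0 (f 0 - 1 + 1 - (f x + 1)) with h | h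
    · rw [Int.toNat_of_nonneg h] at hcast
      linarith
    · rw [Int.toNat_of_nonpos (le_of_lt h)] at hcast
      simp at hcast
      linarith
  -- assemble
  refine ⟨|f 0| + (K + 1) * (2 * (L * K) + 2) + 2 * (L * K) + 1, fun x => ?_⟩
  have e1 : f 0 ≤ |f 0| := le_abs_self _
  have e2 : -|f 0| ≤ f 0 := neg_abs_le _
  have hprod : (0:ℤ) ≤ (K + 1) * (2 * (L * K) + 2) :=
    mul_nonneg (by linarith) (by linarith)
  rcases le_or_gt x (-(2 * (L * K) + 2)) with h1 | h1
  · have hu := count_dn x (by linarith)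
    have hl := count_ln x h1
    rw [abs_le]
    constructor <;> linarith
  · rcases le_or_gt (2 * (L * K) + 2) x with h2 | h2
    · have hu := count_up x (by linarith)
      have hl := count_lo x h2
      rw [abs_le]
      constructor <;> linarith
    · -- middle range
      have h3 := hLip x 0
      rw [sub_zero] at h3
      have h4 : |x| ≤ 2 * (L * K) + 1 := abs_le.mpr ⟨by linarith, by linarith⟩
      have h5 : K * |x| ≤ K * (2 * (L * K) + 1) :=
        mul_le_mul_of_nonneg_left h4 (by linarith)
      have h6 : |f x - x| ≤ |f x - f 0| + |f 0 - x| := by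
        rw [show f x - x = (f x - f 0) + (f 0 - x) from by ring]
        exact abs_add_le _ _
      have h7 : |f 0 - x| ≤ |f 0| + |x| := abs_sub _ _
      have key : K * (2 * (L * K) + 1) + (2 * (L * K) + 1) ≤
          (K + 1) * (2 * (L * K) + 2) := by nlinarith
      linarith

/-- Every bi-Lipschitz bijection of ℤ is at bounded distance from
the identity or from the reflection. -/
theorem biLipschitz_bijection_int_bounded_dist
    (f : ℤ → ℤ) (hf : Function.Bijective f) (K L : ℤ)
    (hK : 1 ≤ K) (hL : 1 ≤ L)
    (hLip : ∀ x y : ℤ, |f x - f y| ≤ K * |x - y|)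
    (hLipInv : ∀ x y : ℤ, |x - y| ≤ L * |f x - f y|) :
    (∃ M : ℤ, ∀ x : ℤ, |f x - x| ≤ M) ∨ (∃ M : ℤ, ∀ x : ℤ, |f x + x| ≤ M) := by
  have hP : (1 : ℤ) ≤ L * K := by nlinarith
  have hne : f (L * K + 1) ≠ f 0 := by
    intro h
    have := hf.injective h
    linarith
  rcases hne.lt_or_gt with hlt | hgt
  · right
    have hg : Function.Bijective (fun x : ℤ => -f x) :=
      Function.Bijective.comp neg_involutive.bijective hf
    have hgLip : ∀ x y : ℤ, |(fun x : ℤ => -f x) x - (fun x : ℤ => -f x) y| ≤ K * |x - y| := by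
      intro x y
      simp only
      rw [show -f x - -f y = -(f x - f y) from by ring, abs_neg]
      exact hLip x y
    have hgLipInv : ∀ x y : ℤ, |x - y| ≤ L * |(fun x : ℤ => -f x) x - (fun x : ℤ => -f x) y| := by
      intro x y
      simp only
      rw [show -f x - -f y = -(f x - f y) from by ring, abs_neg]
      exact hLipInv x y
    have hgpos : ∀ x : ℤ, L * K < x → (fun x : ℤ => -f x) 0 < (fun x : ℤ => -f x) x := by
      intro x hx
      exact rayR (fun x : ℤ => -f x) hg.injective K L hK hL hgLip hgLipInv
        0 (L * K + 1) x (by linarith) (by linarith) (by linarith)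
    obtain ⟨M, hM⟩ := main_aux (fun x : ℤ => -f x) hg K L hK hL hgLip hgLipInv hgpos
    refine ⟨M, fun x => ?_⟩
    have h := hM x
    rwa [show -f x - x = -(f x + x) from by ring, abs_neg] at h
  · left
    apply main_aux f hf K L hK hL hLip hLipInv
    intro x hx
    exact rayR f hf.injective K L hK hL hLip hLipInv 0 (L * K + 1) x
      (by linarith) (by linarith) hgt
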